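/- For every n ≥ 6, the covering product of the simplex T_n = conv{e_1, …, e_n, −𝟏} in ℝ^n satisfies μ_1(T_n) · μ_2(T_n) · … · μ_n(T_n) · vol(T_n) ≤ (n+1) / (16/15)^{7n/15}. -/

import Mathlib

open MeasureTheory Pointwise

/-- The integer lattice `ℤⁿ` viewed as a subset of `ℝⁿ`. -/
def intLattice (n : ℕ) : Set (EuclideanSpace ℝ (Fin n)) :=
  {x | ∀ j, ∃ m : ℤ, x j = (m : ℝ)}

/-- The `i`-th covering minimum `μ_i(K, ℤⁿ)` of a convex body `K ⊆ ℝⁿ`: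
the least `μ > 0` such that `μK + ℤⁿ` meets every `(n-i)`-dimensional affine subspace. -/
noncomputable def covMin (n i : ℕ) (K : Set (EuclideanSpace ℝ (Fin n))) : ℝ :=
  sInf {μ : ℝ | 0 < μ ∧ ∀ L : AffineSubspace ℝ (EuclideanSpace ℝ (Fin n)),
    (L : Set (EuclideanSpace ℝ (Fin n))).Nonempty →
    Module.finrank ℝ L.direction = n - i →
    ((μ • K + intLattice n) ∩ (L : Set (EuclideanSpace ℝ (Fin n)))).Nonempty}

/-- The simplex `T_n = conv{e_1, …, e_n, -𝟏}`, where `𝟏 = (1, …, 1)`. -/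
noncomputable def Tsimplex (n : ℕ) : Set (EuclideanSpace ℝ (Fin n)) :=
  convexHull ℝ ((Set.range fun j : Fin n => EuclideanSpace.single j (1 : ℝ)) ∪
    {(WithLp.toLp 2 (fun _ : Fin n => (-1 : ℝ)) : EuclideanSpace ℝ (Fin n))})


lemma hermite_bound (m : ℕ) (hm : 1 ≤ m) (y : ℝ) :
    ∑ t ∈ Finset.range m, Int.fract (y + t / m) ≤ ((m : ℝ) + 1) / 2 := by
  have hm0 : (0:ℝ) < m := by exact_mod_cast hm
  set q : ℤ := ⌊y⌋ with hq
  set u : ℝ := Int.fract y with hu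
  have hu0 : 0 ≤ u := Int.fract_nonneg y
  have hu1 : u < 1 := Int.fract_lt_one y
  have hyqu : y = q + u := by rw [hq, hu, Int.fract]; ring
  have hmu0 : (0:ℤ) ≤ ⌊(m:ℝ) * u⌋ := Int.floor_nonneg.2 (by positivity)
  set r : ℕ := (⌊(m:ℝ) * u⌋).toNat with hrdef
  have hrcast : (r : ℝ) = ((⌊(m:ℝ) * u⌋ : ℤ) : ℝ) := by
    rw [hrdef]
    exact_mod_cast congrArg (fun z : ℤ => (z : ℝ)) (Int.toNat_of_nonneg hmu0)
  have hr_le : (r:ℝ) ≤ (m:ℝ) * u := by rw [hrcast]; exact Int.floor_le _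
  have hr_gt : (m:ℝ) * u - 1 < r := by rw [hrcast]; linarith [Int.lt_floor_add_one ((m:ℝ) * u)]
  have hrm : r ≤ m := by
    have : (r:ℝ) < m := lt_of_le_of_lt hr_le (by nlinarith)
    exact_mod_cast this.le
  -- lower bound on the sum of floors
  have key : (m:ℝ) * y - 1 ≤ ∑ t ∈ Finset.range m, ((⌊y + t / m⌋ : ℤ) : ℝ) := by
    have hsplit : ∑ t ∈ Finset.Ico 0 (m - r), ((⌊y + t / m⌋ : ℤ) : ℝ)
        + ∑ t ∈ Finset.Ico (m - r) m, ((⌊y + t / m⌋ : ℤ) : ℝ)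
        = ∑ t ∈ Finset.range m, ((⌊y + t / m⌋ : ℤ) : ℝ) := by
      rw [Finset.range_eq_Ico]
      exact Finset.sum_Ico_consecutive _ (Nat.zero_le _) (Nat.sub_le m r)
    have h1 : ∀ t ∈ Finset.Ico 0 (m - r), ((q:ℝ)) ≤ ((⌊y + t / m⌋ : ℤ) : ℝ) := by
      intro t _
      have h : (q : ℝ) ≤ y + t / m := by
        have := Int.floor_le y
        have ht : (0:ℝ) ≤ (t:ℝ) / m := by positivity
        linarith
      exact_mod_cast Int.le_floor.2 h
    have h2 : ∀ t ∈ Finset.Ico (m - r) m, ((q:ℝ) + 1) ≤ ((⌊y + t / m⌋ : ℤ) : ℝ) := by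
      intro t ht
      obtain ⟨ht1, ht2⟩ := Finset.mem_Ico.1 ht
      have htr : ((m : ℝ) - r) ≤ t := by
        have h4 := Nat.cast_le (α := ℝ) |>.2 ht1
        rwa [Nat.cast_sub hrm] at h4
      have h : (q : ℝ) + 1 ≤ y + t / m := by
        rw [hyqu]
        have h5 : ((m:ℝ) - r) / m ≤ (t:ℝ) / m := by gcongr
        have h3 : 1 - u ≤ ((m:ℝ) - r) / m := by
          rw [sub_div, div_self (ne_of_gt hm0)]
          have : (r:ℝ)/m ≤ u := by
            rw [div_le_iff₀ hm0]; linarith [hr_le]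
          linarith
        linarith
      have h6 : (q + 1 : ℤ) ≤ ⌊y + t / m⌋ := Int.le_floor.2 (by exact_mod_cast h)
      exact_mod_cast h6
    have e1 : ((m - r : ℕ) : ℝ) * q ≤ ∑ t ∈ Finset.Ico 0 (m - r), ((⌊y + t / m⌋ : ℤ) : ℝ) := by
      have := Finset.sum_le_sum h1 -- wrong direction name? sum_le_sum gives ∑ f ≤ ∑ g from pointwise
      calc ((m - r : ℕ) : ℝ) * q = ∑ _t ∈ Finset.Ico 0 (m - r), (q:ℝ) := by
            rw [Finset.sum_const, Nat.card_Ico, Nat.sub_zero, nsmul_eq_mul]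
        _ ≤ _ := Finset.sum_le_sum h1
    have e2 : (r : ℝ) * (q + 1) ≤ ∑ t ∈ Finset.Ico (m - r) m, ((⌊y + t / m⌋ : ℤ) : ℝ) := by
      calc (r : ℝ) * (q + 1) = ∑ _t ∈ Finset.Ico (m - r) m, ((q:ℝ) + 1) := by
            rw [Finset.sum_const, Nat.card_Ico, nsmul_eq_mul, Nat.sub_sub_self hrm]
        _ ≤ _ := Finset.sum_le_sum h2
    have hcast : ((m - r : ℕ) : ℝ) = (m : ℝ) - r := by rw [Nat.cast_sub hrm]
    rw [← hsplit]
    have : (m:ℝ) * y - 1 ≤ ((m - r : ℕ) : ℝ) * q + (r : ℝ) * (q + 1) := by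
      rw [hcast, hyqu]; nlinarith [hr_gt]
    linarith
  -- now conclude
  have hfr : ∀ t ∈ Finset.range m, Int.fract (y + t / m) = (y + t / m) - ((⌊y + t / m⌋ : ℤ) : ℝ) := by
    intro t _; rw [Int.fract]
  rw [Finset.sum_congr rfl hfr, Finset.sum_sub_distrib]
  have hsum1 : ∑ t ∈ Finset.range m, (y + (t:ℝ) / m) = m * y + ((m:ℝ) - 1) / 2 := by
    rw [Finset.sum_add_distrib, Finset.sum_const, Finset.card_range, nsmul_eq_mul]
    have : ∑ t ∈ Finset.range m, ((t:ℝ) / m) = ((m:ℝ) - 1) / 2 := by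
      rw [← Finset.sum_div]
      have hg : (∑ t ∈ Finset.range m, (t:ℝ)) = (m:ℝ) * ((m:ℝ) - 1) / 2 := by
        have h7 : ((∑ t ∈ Finset.range m, t) * 2 : ℕ) = m * (m - 1) := Finset.sum_range_id_mul_two m
        have h8 : ((∑ t ∈ Finset.range m, t : ℕ) : ℝ) * 2 = (m:ℝ) * ((m:ℝ) - 1) := by
          have := congrArg (fun k : ℕ => (k : ℝ)) h7
          push_cast at this
          rw [Nat.cast_sub hm] at this
          · push_cast at this ⊢; linarith
        push_cast at h8 ⊢
        linarith
      rw [hg]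
      field_simp
    rw [this]
  rw [hsum1]
  linarith [key]


lemma mem_Tsimplex {n : ℕ} (hn : 1 ≤ n) (y : EuclideanSpace ℝ (Fin n))
    (h1 : ∀ k, -((1 - ∑ j, y j) / (n + 1)) ≤ y k) (h2 : ∑ j, y j ≤ 1) :
    y ∈ Tsimplex n := by
  classical
  set S := ∑ j, y j with hS
  set s : ℝ := (1 - S) / (n + 1) with hs
  set negone : EuclideanSpace ℝ (Fin n) := (WithLp.toLp 2 (fun _ : Fin n => (-1 : ℝ)) : EuclideanSpace ℝ (Fin n)) with hneg
  have hn1 : (0:ℝ) < (n:ℝ) + 1 := by positivity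
  have hn0 : (0:ℝ) < (n:ℝ) := by exact_mod_cast hn
  have hs0 : 0 ≤ s := div_nonneg (by linarith) hn1.le
  have hSn : -((n:ℝ)) * s ≤ S := by
    have h : ∑ j : Fin n, -s ≤ S := by
      rw [hS]; exact Finset.sum_le_sum (fun j _ => h1 j)
    simpa [Finset.sum_const, nsmul_eq_mul] using h
  have hSge : -(n:ℝ) ≤ S := by
    have h' : -(n:ℝ) * (1 - S) ≤ S * ((n:ℝ)+1) := by
      have h'' := mul_le_mul_of_nonneg_right hSn hn1.le
      rw [hs] at h''
      rwa [mul_assoc, div_mul_cancel₀ _ (ne_of_gt hn1)] at h''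
    nlinarith
  have hs1 : s ≤ 1 := by
    rw [hs, div_le_one hn1]; linarith
  have hone : negone ∈ Tsimplex n := subset_convexHull ℝ _ (Or.inr rfl)
  rcases eq_or_lt_of_le hs1 with hseq | hslt
  · have hSeq : S = -(n:ℝ) := by
      rw [hs] at hseq; field_simp at hseq; linarith
    have hy : y = negone := by
      ext k
      have hsum0 : ∑ j, (y j + 1) = 0 := by
        rw [Finset.sum_add_distrib, ← hS, hSeq]; simp
      have hpt : ∀ j ∈ Finset.univ, (0:ℝ) ≤ y j + 1 := by
        intro j _; have h := h1 j; rw [hseq] at h; linarith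
      have := (Finset.sum_eq_zero_iff_of_nonneg hpt).1 hsum0 k (Finset.mem_univ k)
      show y k = -1
      linarith
    rw [hy]; exact hone
  · have h1s : 0 < 1 - s := by linarith
    have hnS : 0 < (n:ℝ) + S := by
      have h9 : s < 1 := hslt
      rw [hs, div_lt_one hn1] at h9; linarith
    set w : Fin n → ℝ := fun k => (y k + s) / (1 - s) with hw
    have hwnn : ∀ k ∈ Finset.univ, 0 ≤ w k := by
      intro k _
      exact div_nonneg (by linarith [h1 k]) h1s.le
    have hsumw : ∑ k, w k = 1 := by
      rw [hw]
      rw [← Finset.sum_div, Finset.sum_add_distrib, ← hS, Finset.sum_const,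
        Finset.card_univ, Fintype.card_fin, nsmul_eq_mul]
      have e1 : S + (n:ℝ) * s = (S + n) / (n + 1) := by rw [hs]; field_simp; ring
      have e2 : 1 - s = (S + n) / (n + 1) := by rw [hs]; field_simp; ring
      rw [e1, e2]
      exact div_self (ne_of_gt (div_pos (by linarith) hn1))
    set a : EuclideanSpace ℝ (Fin n) := WithLp.toLp 2 w with ha
    have heq : Finset.univ.centerMass w (fun k => EuclideanSpace.single k (1:ℝ)) = a := by
      rw [Finset.centerMass, hsumw, inv_one, one_smul]
      ext j
      rw [WithLp.ofLp_sum, Finset.sum_apply]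
      simp only [PiLp.smul_apply, EuclideanSpace.single_apply, smul_eq_mul, mul_ite, mul_one,
        mul_zero]
      rw [Finset.sum_ite_eq]
      simp [ha]
    have haT : a ∈ convexHull ℝ (Set.range fun j : Fin n => EuclideanSpace.single j (1 : ℝ)) := by
      rw [← heq]
      exact Finset.centerMass_mem_convexHull _ hwnn (by rw [hsumw]; norm_num)
        (fun k _ => Set.mem_range_self k)
    have hy : y = (1 - s) • a + s • negone := by
      ext k
      show y k = (1 - s) * ((y k + s) / (1 - s)) + s * (-1)
      field_simp
      ring
    rw [hy]
    have haT' : a ∈ Tsimplex n := convexHull_mono Set.subset_union_left haT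
    exact (convex_convexHull ℝ _) haT' hone h1s.le hs0 (by ring)


lemma span_singles_top (n : ℕ) :
    Submodule.span ℝ (Set.range fun j : Fin n => EuclideanSpace.single j (1:ℝ)) = ⊤ := by
  have hb := (EuclideanSpace.basisFun (Fin n) ℝ).toBasis.span_eq
  rw [← hb]
  congr 1
  ext x
  simp [EuclideanSpace.basisFun_apply]

lemma exists_coord_complement (n : ℕ) (k : ℕ) :
    ∀ (V : Submodule ℝ (EuclideanSpace ℝ (Fin n))), n ≤ Module.finrank ℝ V + k →
    ∃ J : Finset (Fin n), J.card ≤ k ∧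
      V ⊔ Submodule.span ℝ ((fun j => EuclideanSpace.single j (1:ℝ)) '' (J : Set (Fin n))) = ⊤ := by
  induction k with
  | zero =>
    intro V hV
    refine ⟨∅, le_rfl, ?_⟩
    have h1 : Module.finrank ℝ V = n := by
      have h2 : Module.finrank ℝ V ≤ n := by
        have := Submodule.finrank_le V
        rwa [finrank_euclideanSpace_fin] at this
      omega
    have : V = ⊤ := Submodule.eq_top_of_finrank_eq (by rw [h1, finrank_euclideanSpace_fin])
    simp [this]
  | succ k ih =>
    intro V hV
    by_cases htop : V = ⊤
    · exact ⟨∅, by simp, by simp [htop]⟩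
    · have hex : ∃ j : Fin n, EuclideanSpace.single j (1:ℝ) ∉ V := by
        by_contra hall
        push_neg at hall
        apply htop
        rw [← top_le_iff, ← span_singles_top n, Submodule.span_le]
        rintro x ⟨j, rfl⟩
        exact hall j
      obtain ⟨j, hj⟩ := hex
      set V' := V ⊔ Submodule.span ℝ {EuclideanSpace.single j (1:ℝ)} with hV'
      have hlt : V < V' := by
        refine lt_of_le_of_ne le_sup_left (fun h => hj ?_)
        rw [h]
        exact Submodule.mem_sup_right (Submodule.mem_span_singleton_self _)
      have hrk : Module.finrank ℝ V + 1 ≤ Module.finrank ℝ V' :=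
        Submodule.finrank_lt_finrank_of_lt hlt
      obtain ⟨J', hJ'c, hJ'⟩ := ih V' (by omega)
      refine ⟨insert j J', ?_, ?_⟩
      · exact (Finset.card_insert_le _ _).trans (by omega)
      · rw [Finset.coe_insert, Set.image_insert_eq, Submodule.span_insert, ← sup_assoc, ← hV']
        exact hJ'


lemma exists_point_coords (n : ℕ) (L : AffineSubspace ℝ (EuclideanSpace ℝ (Fin n)))
    (hL : (L : Set (EuclideanSpace ℝ (Fin n))).Nonempty) (J : Finset (Fin n))
    (hsup : L.direction ⊔ Submodule.span ℝ
      ((fun j => EuclideanSpace.single j (1:ℝ)) '' (J : Set (Fin n))) = ⊤) :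
    ∃ x, x ∈ L ∧ ∀ k, k ∉ J → x k = 0 := by
  obtain ⟨p, hp⟩ := hL
  have hp2 : p ∈ L.direction ⊔ Submodule.span ℝ
      ((fun j => EuclideanSpace.single j (1:ℝ)) '' (J : Set (Fin n))) := by
    rw [hsup]; trivial
  obtain ⟨v, hv, w, hw, hvw⟩ := Submodule.mem_sup.1 hp2
  have hcoords : ∀ w' ∈ Submodule.span ℝ
      ((fun j => EuclideanSpace.single j (1:ℝ)) '' (J : Set (Fin n))), ∀ k, k ∉ J → w' k = 0 := by
    intro w' hw'
    induction hw' using Submodule.span_induction with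
    | mem z hz =>
      intro k hk
      obtain ⟨j, hj, rfl⟩ := hz
      have : k ≠ j := fun h => hk (h ▸ hj)
      simp [EuclideanSpace.single_apply, this]
    | zero => intro k _; rfl
    | add z1 z2 _ _ h1 h2 => intro k hk; show z1 k + z2 k = 0; rw [h1 k hk, h2 k hk]; ring
    | smul c z _ hz => intro k hk; show c * z k = 0; rw [hz k hk]; ring
  refine ⟨w, ?_, hcoords w hw⟩
  have hmem := AffineSubspace.vadd_mem_of_mem_direction (L.direction.neg_mem hv) hp
  have : (-v) +ᵥ p = w := by
    show -v + p = w
    rw [← hvw]; abel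
  rwa [this] at hmem

lemma covMin_Tsimplex_le (n i m : ℕ) (hi1 : 1 ≤ i) (hin : i ≤ n) (hm : 1 ≤ m) :
    covMin n i (Tsimplex n) ≤ ((n:ℝ) + 1) * ((m:ℝ) - 1) / (2 * m) + (i:ℝ) / m := by
  classical
  have hn1 : 1 ≤ n := le_trans hi1 hin
  have hm0 : (0:ℝ) < m := by exact_mod_cast hm
  have hn0 : (0:ℝ) < n := by exact_mod_cast hn1
  have hi0 : (0:ℝ) < i := by exact_mod_cast hi1
  set μ : ℝ := ((n:ℝ) + 1) * ((m:ℝ) - 1) / (2 * m) + (i:ℝ) / m with hμ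
  have hμ0 : 0 < μ := by
    have h1 : 0 ≤ ((n:ℝ) + 1) * ((m:ℝ) - 1) / (2 * m) := by
      apply div_nonneg _ (by positivity)
      have : (1:ℝ) ≤ m := by exact_mod_cast hm
      nlinarith
    have h2 : 0 < (i:ℝ) / m := by positivity
    rw [hμ]; linarith
  apply csInf_le ⟨0, fun x hx => hx.1.le⟩
  refine ⟨hμ0, ?_⟩
  intro L hLne hLrk
  obtain ⟨J, hJcard, hJsup⟩ := exists_coord_complement n i L.direction (by rw [hLrk]; omega)
  obtain ⟨x, hxL, hx0⟩ := exists_point_coords n L hLne J hJsup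
  have hJn : (J.card : ℝ) ≤ (i : ℝ) := by exact_mod_cast hJcard
  have hJtop : (J.card : ℝ) ≤ (n : ℝ) := by
    exact_mod_cast (J.card_le_univ.trans_eq (by simp))
  -- choose θ = t/m
  set g : ℕ → ℝ := fun t =>
    (∑ j ∈ J, Int.fract (x j + (t:ℝ) / m)) + ((n:ℝ) + 1 - J.card) * ((t:ℝ) / m) with hg
  have havg : ∑ t ∈ Finset.range m, g t ≤ ∑ t ∈ Finset.range m, μ := by
    rw [Finset.sum_const, Finset.card_range, nsmul_eq_mul]
    rw [hg]
    rw [Finset.sum_add_distrib]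
    have hA : ∑ t ∈ Finset.range m, (∑ j ∈ J, Int.fract (x j + (t:ℝ) / m))
        ≤ (J.card : ℝ) * (((m:ℝ) + 1) / 2) := by
      rw [Finset.sum_comm]
      calc ∑ j ∈ J, ∑ t ∈ Finset.range m, Int.fract (x j + (t:ℝ) / m)
          ≤ ∑ j ∈ J, ((m:ℝ) + 1) / 2 := Finset.sum_le_sum (fun j _ => hermite_bound m hm (x j))
        _ = (J.card : ℝ) * (((m:ℝ) + 1) / 2) := by rw [Finset.sum_const, nsmul_eq_mul]
    have hB : ∑ t ∈ Finset.range m, ((n:ℝ) + 1 - J.card) * ((t:ℝ) / m)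
        = ((n:ℝ) + 1 - J.card) * (((m:ℝ) - 1) / 2) := by
      rw [← Finset.mul_sum]
      congr 1
      rw [← Finset.sum_div]
      have hgauss : (∑ t ∈ Finset.range m, (t:ℝ)) = (m:ℝ) * ((m:ℝ) - 1) / 2 := by
        have h7 : ((∑ t ∈ Finset.range m, t) * 2 : ℕ) = m * (m - 1) := Finset.sum_range_id_mul_two m
        have h8 := congrArg (fun k : ℕ => (k : ℝ)) h7
        push_cast [Nat.cast_sub hm] at h8
        linarith
      rw [hgauss]
      field_simp
    rw [hB]
    have : (J.card : ℝ) * (((m:ℝ) + 1) / 2) + ((n:ℝ) + 1 - J.card) * (((m:ℝ) - 1) / 2)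
        = ((n:ℝ) + 1) * ((m:ℝ) - 1) / 2 + J.card := by ring
    have hfin : ((n:ℝ) + 1) * ((m:ℝ) - 1) / 2 + (J.card : ℝ) ≤ (m:ℝ) * μ := by
      rw [hμ]
      have : (m:ℝ) * (((n:ℝ) + 1) * ((m:ℝ) - 1) / (2 * m) + (i:ℝ) / m)
          = ((n:ℝ) + 1) * ((m:ℝ) - 1) / 2 + (i:ℝ) := by
        field_simp
      rw [this]
      linarith
    linarith
  obtain ⟨t, htm, hgt⟩ := Finset.exists_le_of_sum_le ⟨0, Finset.mem_range.2 hm⟩ havg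
  set θ : ℝ := (t:ℝ) / m with hθ
  have hθ0 : 0 ≤ θ := by positivity
  -- the lattice point
  set z : EuclideanSpace ℝ (Fin n) :=
    (WithLp.toLp 2 (fun k => if k ∈ J then ((⌊x k + θ⌋ : ℤ) : ℝ) else 0) : EuclideanSpace ℝ (Fin n)) with hz
  have hzLat : z ∈ intLattice n := by
    intro k
    by_cases hk : k ∈ J
    · exact ⟨⌊x k + θ⌋, by simp [hz, hk]⟩
    · exact ⟨0, by simp [hz, hk]⟩
  have hzk : ∀ k, k ∈ J → x k - z k = Int.fract (x k + θ) - θ := by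
    intro k hk
    have hzz : z k = ((⌊x k + θ⌋ : ℤ) : ℝ) := by simp only [hz, WithLp.ofLp_toLp]; rw [if_pos hk]
    rw [hzz, Int.fract]; ring
  have hzk0 : ∀ k, k ∉ J → x k - z k = 0 := by
    intro k hk
    have hzz : z k = 0 := by simp only [hz, WithLp.ofLp_toLp]; rw [if_neg hk]
    rw [hzz, hx0 k hk, sub_zero]
  set u : EuclideanSpace ℝ (Fin n) :=
    (WithLp.toLp 2 (fun k => (x k - z k) / μ) : EuclideanSpace ℝ (Fin n)) with hu
  set F : ℝ := ∑ j ∈ J, Int.fract (x j + θ) with hF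
  have hkey : F + ((n:ℝ) + 1 - J.card) * θ ≤ μ := hgt
  have hF0 : 0 ≤ F := Finset.sum_nonneg (fun j _ => Int.fract_nonneg _)
  have husum : ∑ k, u k = (F - J.card * θ) / μ := by
    have hcong : ∀ k ∈ Finset.univ, u k
        = (if k ∈ J then (Int.fract (x k + θ) - θ) / μ else 0) := by
      intro k _
      have huk' : u k = (x k - z k) / μ := rfl
      by_cases hk : k ∈ J
      · rw [huk', hzk k hk, if_pos hk]
      · rw [huk', hzk0 k hk, if_neg hk, zero_div]
    rw [Finset.sum_congr rfl hcong, Finset.sum_ite_mem, Finset.univ_inter, ← Finset.sum_div]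
    congr 1
    rw [Finset.sum_sub_distrib, Finset.sum_const, nsmul_eq_mul, hF]
  have huk : ∀ k, -(θ / μ) ≤ u k := by
    intro k
    have huk' : u k = (x k - z k) / μ := rfl
    by_cases hk : k ∈ J
    · rw [huk', hzk k hk, show -(θ/μ) = (-θ)/μ by ring]
      apply div_le_div_of_nonneg_right ?h hμ0.le |>.trans_eq rfl
      case h => linarith [Int.fract_nonneg (x k + θ)]
    · rw [huk', hzk0 k hk, zero_div]
      have : 0 ≤ θ/μ := div_nonneg hθ0 hμ0.le
      linarith
  have hsum_le : ∑ k, u k ≤ 1 := by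
    rw [husum, div_le_one hμ0]
    have h9 : 0 ≤ (n:ℝ) * θ := mul_nonneg hn0.le hθ0
    have hexp : ((n:ℝ)+1-J.card)*θ = (n:ℝ)*θ + θ - J.card*θ := by ring
    linarith [hkey, hexp, hθ0]
  have h1u : ∀ k, -((1 - ∑ j, u j)/((n:ℝ)+1)) ≤ u k := by
    intro k
    have h2' : θ/μ ≤ (1 - ∑ j, u j)/((n:ℝ)+1) := by
      rw [husum]
      have e : 1 - (F - J.card*θ)/μ = (μ - F + J.card*θ)/μ := by field_simp; ring
      rw [e, div_div (μ - F + J.card*θ) μ ((n:ℝ)+1), div_le_div_iff₀ hμ0 (by positivity)]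
      have hexp : ((n:ℝ)+1-J.card)*θ = ((n:ℝ)+1)*θ - J.card*θ := by ring
      have hstep : ((n:ℝ)+1)*θ ≤ μ - F + J.card*θ := by linarith [hkey, hexp]
      have hmul := mul_le_mul_of_nonneg_right hstep hμ0.le
      have hrw : θ*(μ*((n:ℝ)+1)) = (((n:ℝ)+1)*θ)*μ := by ring
      linarith [hmul, hrw]
    have h3' := huk k
    linarith
  have huT : u ∈ Tsimplex n := mem_Tsimplex hn1 u h1u hsum_le
  refine ⟨x, ?_, hxL⟩
  rw [Set.mem_add]
  refine ⟨μ • u, Set.smul_mem_smul_set huT, z, hzLat, ?_⟩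
  ext k
  show μ * u k + z k = x k
  show μ * ((x k - z k)/μ) + z k = x k
  field_simp
  ring


def corner (n : ℕ) (c : ℝ) : Set (Fin n → ℝ) := {x | (∀ i, 0 ≤ x i) ∧ ∑ i, x i ≤ c}

lemma corner_meas (n : ℕ) (c : ℝ) : MeasurableSet (corner n c) := by
  have h1 : corner n c = (⋂ i, {x : Fin n → ℝ | 0 ≤ x i}) ∩ {x : Fin n → ℝ | ∑ i, x i ≤ c} := by
    ext x; simp [corner, Set.mem_iInter]
  rw [h1]
  apply MeasurableSet.inter
  · exact MeasurableSet.iInter (fun i => measurableSet_le measurable_const (measurable_pi_apply i))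
  · exact measurableSet_le (Finset.univ.measurable_sum (fun i _ => measurable_pi_apply i))
      measurable_const

lemma corner_volume (n : ℕ) : ∀ c : ℝ, 0 ≤ c →
    volume (corner n c) ≤ ENNReal.ofReal (c ^ n / n.factorial) := by
  induction n with
  | zero =>
    intro c hc
    have h1 : volume (corner 0 c) ≤ volume (Set.univ : Set (Fin 0 → ℝ)) :=
      measure_mono (Set.subset_univ _)
    have h2 : volume (Set.univ : Set (Fin 0 → ℝ)) = 1 := by
      rw [MeasureTheory.volume_pi, Measure.pi_univ]
      simp
    rw [h2] at h1
    simpa using h1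
  | succ n ih =>
    intro c hc
    set e := (MeasurableEquiv.piFinSuccAbove (fun _ : Fin (n+1) => ℝ) 0) with he
    have mp := (volume_preserving_piFinSuccAbove (fun _ : Fin (n+1) => ℝ) 0)
    -- volume (corner (n+1) c) = (volume.prod volume) (e.symm ⁻¹' corner)
    have hpre : volume (corner (n+1) c)
        = (volume.prod volume) (⇑e.symm ⁻¹' (corner (n+1) c)) := by
      exact ((MeasurePreserving.symm e mp).measure_preimage
        (corner_meas _ _).nullMeasurableSet).symm
    have hslice : ∀ t : ℝ, Prod.mk t ⁻¹' (⇑e.symm ⁻¹' (corner (n+1) c))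
        = (if 0 ≤ t then corner n (c - t) else ∅) := by
      intro t
      ext x
      simp only [Set.mem_preimage, corner, Set.mem_setOf_eq]
      have hx : e.symm (t, x) = Fin.cons t x := by
        rw [he]
        simp only [MeasurableEquiv.piFinSuccAbove_symm_apply, Fin.insertNthEquiv,
          Equiv.coe_fn_mk, Fin.insertNth_zero]
        simp
      rw [hx]
      rw [Fin.sum_cons]
      constructor
      · rintro ⟨hall, hsum⟩
        have ht : 0 ≤ t := by have := hall 0; rwa [Fin.cons_zero] at this
        rw [if_pos ht]
        refine ⟨fun i => by have := hall i.succ; rwa [Fin.cons_succ] at this, by linarith⟩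
      · intro hmem
        by_cases ht : 0 ≤ t
        · rw [if_pos ht] at hmem
          obtain ⟨hall, hsum⟩ := hmem
          refine ⟨fun i => ?_, by linarith⟩
          refine Fin.cases ?_ ?_ i
          · rw [Fin.cons_zero]; exact ht
          · intro j; rw [Fin.cons_succ]; exact hall j
        · rw [if_neg ht] at hmem
          exact absurd hmem (Set.notMem_empty x)
    have hprod : (volume.prod volume) (⇑e.symm ⁻¹' (corner (n+1) c))
        = ∫⁻ t : ℝ, volume (Prod.mk t ⁻¹' (⇑e.symm ⁻¹' (corner (n+1) c))) := by
      apply Measure.prod_apply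
      exact e.symm.measurable (corner_meas _ _)
    have hbound : ∀ t : ℝ, volume (Prod.mk t ⁻¹' (⇑e.symm ⁻¹' (corner (n+1) c)))
        ≤ (Set.Icc (0:ℝ) c).indicator (fun t => ENNReal.ofReal ((c - t) ^ n / n.factorial)) t := by
      intro t
      rw [hslice t]
      by_cases ht : 0 ≤ t
      · rw [if_pos ht]
        by_cases htc : t ≤ c
        · rw [Set.indicator_of_mem (Set.mem_Icc.2 ⟨ht, htc⟩)]
          exact ih (c - t) (by linarith)
        · have : corner n (c - t) = ∅ := by
            ext x
            simp only [corner, Set.mem_setOf_eq, Set.mem_empty_iff_false, iff_false]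
            rintro ⟨hall, hsum⟩
            have : 0 ≤ ∑ i, x i := Finset.sum_nonneg (fun i _ => hall i)
            linarith [not_le.1 htc]
          rw [this]
          simp
      · rw [if_neg ht]
        simp
    calc volume (corner (n+1) c)
        = ∫⁻ t : ℝ, volume (Prod.mk t ⁻¹' (⇑e.symm ⁻¹' (corner (n+1) c))) := by
          rw [hpre, hprod]
      _ ≤ ∫⁻ t : ℝ, (Set.Icc (0:ℝ) c).indicator
            (fun t => ENNReal.ofReal ((c - t) ^ n / n.factorial)) t :=
          lintegral_mono hbound
      _ = ∫⁻ t in Set.Icc (0:ℝ) c, ENNReal.ofReal ((c - t) ^ n / n.factorial) := by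
          rw [lintegral_indicator measurableSet_Icc]
      _ = ENNReal.ofReal (∫ t in Set.Icc (0:ℝ) c, ((c - t) ^ n / n.factorial)) := by
          rw [← MeasureTheory.ofReal_integral_eq_lintegral_ofReal]
          · exact (Continuous.integrableOn_Icc (by continuity))
          · refine (ae_restrict_iff' measurableSet_Icc).mpr
              (Filter.Eventually.of_forall fun t ht => ?_)
            have h9 : 0 ≤ c - t := by linarith [ht.2]
            positivity
      _ ≤ ENNReal.ofReal (c ^ (n+1) / (n+1).factorial) := by
          apply ENNReal.ofReal_le_ofReal
          rw [MeasureTheory.integral_Icc_eq_integral_Ioc,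
            ← intervalIntegral.integral_of_le hc]
          have h1 : ∫ t in (0:ℝ)..c, ((c - t) ^ n / n.factorial)
              = (∫ t in (0:ℝ)..c, (c - t) ^ n) / n.factorial := by
            rw [intervalIntegral.integral_div]
          rw [h1]
          have h2 : ∫ t in (0:ℝ)..c, (c - t) ^ n = ∫ u in (c - c)..(c - 0), u ^ n := by
            rw [intervalIntegral.integral_comp_sub_left (fun u => u ^ n) c]
          rw [h2]
          simp only [sub_self, sub_zero]
          rw [integral_pow]
          have hz : (0:ℝ)^(n+1) = 0 := zero_pow (by omega)
          rw [hz, sub_zero, Nat.factorial_succ, div_div]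
          apply le_of_eq
          push_cast
          ring


noncomputable def sumLM (n : ℕ) : (Fin n → ℝ) →ₗ[ℝ] ℝ where
  toFun := fun x => ∑ j, x j
  map_add' := by intros x y; simp [Finset.sum_add_distrib]
  map_smul' := by intros c x; simp [Finset.mul_sum]

noncomputable def MLM (n : ℕ) : (Fin n → ℝ) →ₗ[ℝ] (Fin n → ℝ) :=
  LinearMap.id - (sumLM n).smulRight (fun _ => 1/((n:ℝ)+1))

lemma MLM_det (n : ℕ) : LinearMap.det (MLM n) = 1/((n:ℝ)+1) := by
  classical
  have hn1 : (0:ℝ) < (n:ℝ) + 1 := by positivity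
  set b := Pi.basisFun ℝ (Fin n) with hb
  rw [← LinearMap.det_toMatrix b]
  have hmat : LinearMap.toMatrix b b (MLM n)
      = 1 + Matrix.replicateCol Unit (fun _ => -(1/((n:ℝ)+1))) * Matrix.replicateRow Unit (fun _ => (1:ℝ)) := by
    ext i j
    rw [LinearMap.toMatrix_apply]
    have hbj : b j = Pi.single j 1 := by rw [hb]; simp [Pi.basisFun_apply]
    have hsum1 : ∑ k, Pi.single j (1:ℝ) k = 1 := by simp
    have happ : (MLM n) (b j) i = (if j = i then 1 else 0) - 1/((n:ℝ)+1) := by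
      rw [hbj]
      simp only [MLM, sumLM, LinearMap.sub_apply, LinearMap.id_apply, LinearMap.smulRight_apply,
        LinearMap.coe_mk, AddHom.coe_mk, Pi.sub_apply, Pi.smul_apply, smul_eq_mul, hsum1]
      simp [Pi.single_apply, eq_comm]
    rw [hb]
    simp only [Pi.basisFun_repr]
    rw [happ]
    simp only [Matrix.add_apply, Matrix.one_apply, Matrix.mul_apply, Matrix.replicateCol_apply,
      Matrix.replicateRow_apply, Finset.univ_unique, Finset.sum_const, Finset.card_singleton, one_smul]
    by_cases h : i = j
    · subst h; simp; ring
    · have h' : ¬ (j = i) := fun hh => h hh.symm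
      simp [h, h']
  rw [hmat, Matrix.det_one_add_replicateCol_mul_replicateRow]
  rw [dotProduct]
  simp [Finset.sum_const, Finset.card_univ]
  field_simp
  ring

def Ppi (n : ℕ) : Set (Fin n → ℝ) :=
  {x | ∑ j, x j ≤ 1 ∧ ∀ j, (∑ k, x k - 1)/((n:ℝ)+1) ≤ x j}

def PE (n : ℕ) : Set (EuclideanSpace ℝ (Fin n)) :=
  {x | ∑ j, x j ≤ 1 ∧ ∀ j, (∑ k, x k - 1)/((n:ℝ)+1) ≤ x j}

lemma Ppi_meas (n : ℕ) : MeasurableSet (Ppi n) := by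
  have hsum : Measurable (fun x : Fin n → ℝ => ∑ j, x j) :=
    Finset.univ.measurable_sum (fun i _ => measurable_pi_apply i)
  have h1 : Ppi n = {x : Fin n → ℝ | ∑ j, x j ≤ 1}
      ∩ ⋂ j, {x : Fin n → ℝ | (∑ k, x k - 1)/((n:ℝ)+1) ≤ x j} := by
    ext x; simp [Ppi, Set.mem_iInter]
  rw [h1]
  refine (measurableSet_le hsum measurable_const).inter (MeasurableSet.iInter fun j =>
    measurableSet_le (((hsum.sub measurable_const).div_const _)) (measurable_pi_apply j))

lemma Ppi_volume (n : ℕ) : volume (Ppi n) ≤ ENNReal.ofReal (((n:ℝ)+1)/n.factorial) := by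
  classical
  have hn1 : (0:ℝ) < (n:ℝ) + 1 := by positivity
  set w : Fin n → ℝ := fun _ => 1/((n:ℝ)+1) with hw
  have heq : Ppi n = (MLM n) ⁻¹' ((fun y => y + w) ⁻¹' corner n 1) := by
    ext x
    simp only [Ppi, Set.mem_setOf_eq, Set.mem_preimage, corner]
    have happ : ∀ j, ((MLM n) x + w) j = x j - (∑ k, x k) * (1/((n:ℝ)+1)) + 1/((n:ℝ)+1) := by
      intro j
      simp [MLM, sumLM, hw]
    have hsum : ∑ j, ((MLM n) x + w) j
        = (∑ k, x k) - n * ((∑ k, x k) * (1/((n:ℝ)+1))) + n * (1/((n:ℝ)+1)) := by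
      rw [Finset.sum_congr rfl (fun j _ => happ j)]
      rw [Finset.sum_add_distrib, Finset.sum_sub_distrib, Finset.sum_const,
        Finset.card_univ, Fintype.card_fin, nsmul_eq_mul]
      simp [Finset.sum_const, nsmul_eq_mul]
    constructor
    · rintro ⟨hS, hall⟩
      constructor
      · intro j
        rw [happ j]
        have := hall j
        rw [sub_div] at this
        have e : (∑ k, x k) * (1/((n:ℝ)+1)) = (∑ k, x k)/((n:ℝ)+1) := by ring
        rw [e]
        linarith [this]
      · rw [hsum]
        have e : (∑ k, x k) - n * ((∑ k, x k) * (1/((n:ℝ)+1))) + n * (1/((n:ℝ)+1))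
            = ((∑ k, x k) + n)/((n:ℝ)+1) := by field_simp; ring
        rw [e, div_le_one hn1]
        linarith
    · rintro ⟨hall, hS⟩
      have hS' : (∑ k, x k) ≤ 1 := by
        rw [hsum] at hS
        have e : (∑ k, x k) - n * ((∑ k, x k) * (1/((n:ℝ)+1))) + n * (1/((n:ℝ)+1))
            = ((∑ k, x k) + n)/((n:ℝ)+1) := by field_simp; ring
        rw [e, div_le_one hn1] at hS
        linarith
      refine ⟨hS', fun j => ?_⟩
      have := hall j
      rw [happ j] at this
      rw [sub_div]
      have e : (∑ k, x k) * (1/((n:ℝ)+1)) = (∑ k, x k)/((n:ℝ)+1) := by ring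
      rw [e] at this
      have e2 : (1:ℝ)/((n:ℝ)+1) = 1/((n:ℝ)+1) := rfl
      linarith [this]
  rw [heq]
  have hdet : LinearMap.det (MLM n) ≠ 0 := by
    rw [MLM_det]; positivity
  rw [Measure.addHaar_preimage_linearMap volume hdet]
  rw [MLM_det]
  have htrans : volume ((fun y => y + w) ⁻¹' corner n 1) = volume (corner n 1) :=
    measure_preimage_add_right volume w (corner n 1)
  rw [htrans]
  have habs : |((1:ℝ)/((n:ℝ)+1))⁻¹| = (n:ℝ)+1 := by
    rw [one_div, inv_inv, abs_of_pos hn1]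
  rw [habs]
  calc ENNReal.ofReal ((n:ℝ)+1) * volume (corner n 1)
      ≤ ENNReal.ofReal ((n:ℝ)+1) * ENNReal.ofReal ((1:ℝ)^n / n.factorial) :=
        mul_le_mul_right (corner_volume n 1 zero_le_one) _
    _ = ENNReal.ofReal (((n:ℝ)+1) * ((1:ℝ)^n / n.factorial)) := by
        rw [ENNReal.ofReal_mul (by positivity)]
    _ = ENNReal.ofReal (((n:ℝ)+1)/n.factorial) := by
        rw [one_pow]
        congr 1
        ring

lemma volume_PE (n : ℕ) : volume (PE n) = volume (Ppi n) := by
  have mp := EuclideanSpace.volume_preserving_symm_measurableEquiv_toLp (Fin n)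
  have hpre : ((MeasurableEquiv.toLp 2 (Fin n → ℝ)).symm) ⁻¹' (Ppi n) = PE n := by
    ext x; exact Iff.rfl
  rw [← hpre]
  exact mp.measure_preimage (Ppi_meas n).nullMeasurableSet

lemma convex_PE (n : ℕ) : Convex ℝ (PE n) := by
  intro x hx y hy a b ha hb hab
  have hsxy : ∑ j, (a • x + b • y) j = a * ∑ j, x j + b * ∑ j, y j := by
    have : ∀ j, (a • x + b • y) j = a * x j + b * y j := fun j => rfl
    rw [Finset.sum_congr rfl (fun j _ => this j), Finset.sum_add_distrib,
      ← Finset.mul_sum, ← Finset.mul_sum]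
  constructor
  · rw [hsxy]
    have h1 := mul_le_mul_of_nonneg_left hx.1 ha
    have h2 := mul_le_mul_of_nonneg_left hy.1 hb
    linarith
  · intro j
    have h1 := hx.2 j
    have h2 := hy.2 j
    have happ : (a • x + b • y) j = a * x j + b * y j := rfl
    rw [hsxy, happ]
    have e9 : a * (∑ j, x j - 1) + b * (∑ j, y j - 1)
        = a * ∑ j, x j + b * ∑ j, y j - 1 := by linear_combination -hab
    have e : a * ((∑ j, x j - 1)/((n:ℝ)+1)) + b * ((∑ j, y j - 1)/((n:ℝ)+1))
        = (a * ∑ j, x j + b * ∑ j, y j - 1)/((n:ℝ)+1) := by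
      rw [mul_div_assoc', mul_div_assoc', ← add_div, e9]
    rw [← e]
    exact add_le_add (mul_le_mul_of_nonneg_left h1 ha) (mul_le_mul_of_nonneg_left h2 hb)

lemma Tsimplex_subset_PE (n : ℕ) : Tsimplex n ⊆ PE n := by
  unfold Tsimplex
  apply convexHull_min _ (convex_PE n)
  rintro v (⟨j, rfl⟩ | hv)
  · have hsum : ∑ k, EuclideanSpace.single j (1:ℝ) k = 1 := by
      simp [EuclideanSpace.single_apply]
    refine ⟨le_of_eq hsum, fun k => ?_⟩
    rw [hsum]
    simp only [sub_self, zero_div]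
    rw [EuclideanSpace.single_apply]
    split <;> norm_num
  · rw [Set.mem_singleton_iff] at hv
    subst hv
    have hsum : ∑ k : Fin n, ((WithLp.toLp 2 (fun _ : Fin n => (-1 : ℝ)) : EuclideanSpace ℝ (Fin n)) k) = -(n:ℝ) := by
      simp [Finset.sum_const]
    refine ⟨by rw [hsum]; linarith [Nat.cast_nonneg (α := ℝ) n], fun k => ?_⟩
    rw [hsum]
    have e : (-(n:ℝ) - 1)/((n:ℝ)+1) = -1 := by
      rw [div_eq_iff (by positivity : ((n:ℝ)+1) ≠ 0)]
      ring
    rw [e]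

lemma Tsimplex_volume (n : ℕ) :
    (volume (Tsimplex n)).toReal ≤ ((n:ℝ)+1)/n.factorial := by
  have h : volume (Tsimplex n) ≤ ENNReal.ofReal (((n:ℝ)+1)/n.factorial) := by
    calc volume (Tsimplex n) ≤ volume (PE n) := measure_mono (Tsimplex_subset_PE n)
      _ = volume (Ppi n) := volume_PE n
      _ ≤ ENNReal.ofReal (((n:ℝ)+1)/n.factorial) := Ppi_volume n
  exact ENNReal.toReal_le_of_le_ofReal (by positivity) h


lemma pow_ineq : ∀ n : ℕ, 6 ≤ n → ((16/15 : ℝ))^(4*n) ≤ (3/2 : ℝ)^(n-2) := by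
  intro n hn
  induction n, hn using Nat.le_induction with
  | base => norm_num
  | succ n hn ih =>
    have h1 : 4*(n+1) = 4*n + 4 := by ring
    have h2 : n + 1 - 2 = (n - 2) + 1 := by omega
    rw [h1, h2, pow_add, pow_succ]
    have hb : ((16/15:ℝ))^4 ≤ 3/2 := by norm_num
    calc ((16/15:ℝ))^(4*n) * (16/15)^4 ≤ (3/2:ℝ)^(n-2) * (16/15)^4 :=
          mul_le_mul_of_nonneg_right ih (by positivity)
      _ ≤ (3/2:ℝ)^(n-2) * (3/2) := mul_le_mul_of_nonneg_left hb (by positivity)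

lemma arith_key (n : ℕ) (hn : 6 ≤ n) :
    (∏ i ∈ Finset.Icc 1 n, min (i:ℝ) (((n:ℝ)+1)/2)) * (((n:ℝ)+1)/(n.factorial : ℝ))
      ≤ ((n:ℝ)+1) / ((16/15 : ℝ) ^ (7*(n:ℝ)/15)) := by
  have hn1 : (0:ℝ) < (n:ℝ) + 1 := by positivity
  set c : ℝ := (16/15 : ℝ) ^ ((7:ℝ)/15) with hc
  have hcpos : 0 < c := by rw [hc]; positivity
  have hc2 : c ≤ 16/15 := by
    rw [hc]
    calc (16/15 : ℝ) ^ ((7:ℝ)/15) ≤ (16/15 : ℝ) ^ (1:ℝ) :=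
          Real.rpow_le_rpow_of_exponent_le (by norm_num) (by norm_num)
      _ = 16/15 := Real.rpow_one _
  have hrw : (16/15 : ℝ) ^ (7*(n:ℝ)/15) = c ^ n := by
    rw [hc, ← Real.rpow_natCast ((16/15:ℝ) ^ ((7:ℝ)/15)) n, ← Real.rpow_mul (by norm_num)]
    congr 1
    ring
  rw [hrw]
  set h : ℕ := (n+1)/2 with hh
  set q : ℝ := ((n:ℝ)+1)/2 with hq
  have hqpos : 0 < q := by rw [hq]; positivity
  have h1h : 1 ≤ h := by omega
  have hhn : h ≤ n := by omega
  set K : ℕ := (3*n+6)/4 with hK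
  have hhK : h + 1 ≤ K := by omega
  have hKn : K ≤ n := by omega
  set t : ℕ := n + 1 - K with ht
  have hsplit : Finset.Icc 1 n = Finset.Icc 1 h ∪ Finset.Icc (h+1) n := by
    ext a
    simp only [Finset.mem_Icc, Finset.mem_union]
    omega
  have hdisj : Disjoint (Finset.Icc 1 h) (Finset.Icc (h+1) n) := by
    rw [Finset.disjoint_left]
    intro a ha ha'
    simp only [Finset.mem_Icc] at ha ha'
    omega
  have hq_le : ∀ i : ℕ, h + 1 ≤ i → q ≤ (i:ℝ) := by
    intro i hi
    rw [hq]
    have : n + 1 ≤ 2 * i := by omega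
    have h2 : ((n:ℝ)+1) ≤ 2*(i:ℝ) := by exact_mod_cast this
    linarith
  have hminprod : (∏ i ∈ Finset.Icc 1 n, min (i:ℝ) q) ≤ (h.factorial : ℝ) * q^(n-h) := by
    rw [hsplit, Finset.prod_union hdisj]
    have hA : (∏ i ∈ Finset.Icc 1 h, min (i:ℝ) q) ≤ ∏ i ∈ Finset.Icc 1 h, (i:ℝ) := by
      apply Finset.prod_le_prod
      · intro i hi
        simp only [Finset.mem_Icc] at hi
        have h3 : (0:ℝ) < i := by exact_mod_cast hi.1
        exact le_min h3.le hqpos.le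
      · intro i _; exact min_le_left _ _
    have hA2 : ∏ i ∈ Finset.Icc 1 h, (i:ℝ) = (h.factorial : ℝ) := by
      rw [← Nat.cast_prod]
      congr 1
      rw [← Finset.Ico_add_one_right_eq_Icc]
      exact Finset.prod_Ico_id_eq_factorial h
    have hB : (∏ i ∈ Finset.Icc (h+1) n, min (i:ℝ) q) ≤ ∏ _i ∈ Finset.Icc (h+1) n, q := by
      apply Finset.prod_le_prod
      · intro i hi
        simp only [Finset.mem_Icc] at hi
        have h4 : (0:ℝ) < i := by
          have : 0 < i := by omega
          exact_mod_cast this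
        exact le_min h4.le hqpos.le
      · intro i _; exact min_le_right _ _
    have hB2 : ∏ _i ∈ Finset.Icc (h+1) n, q = q^(n-h) := by
      rw [Finset.prod_const, Nat.card_Icc]
      congr 1
      omega
    have hBnn : (0:ℝ) ≤ ∏ i ∈ Finset.Icc (h+1) n, min (i:ℝ) q := by
      apply Finset.prod_nonneg
      intro i hi
      simp only [Finset.mem_Icc] at hi
      have : (0:ℝ) ≤ i := by positivity
      exact le_min this hqpos.le
    exact mul_le_mul (hA.trans_eq hA2) (hB.trans_eq hB2) hBnn (by positivity)
  have hfactsplit : (n.factorial : ℝ) = (h.factorial : ℝ) * ∏ i ∈ Finset.Icc (h+1) n, (i:ℝ) := by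
    have e1 : ∏ i ∈ Finset.Icc 1 n, i = n.factorial := by
      rw [← Finset.Ico_add_one_right_eq_Icc]; exact Finset.prod_Ico_id_eq_factorial n
    have e2 : ∏ i ∈ Finset.Icc 1 h, i = h.factorial := by
      rw [← Finset.Ico_add_one_right_eq_Icc]; exact Finset.prod_Ico_id_eq_factorial h
    have e3 : (h.factorial) * ∏ i ∈ Finset.Icc (h+1) n, i = n.factorial := by
      rw [← e1, ← e2, hsplit, Finset.prod_union hdisj]
    rw [← e3]
    push_cast
    ring
  have hsplit2 : Finset.Icc (h+1) n = Finset.Ico (h+1) K ∪ Finset.Icc K n := by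
    ext a
    simp only [Finset.mem_Icc, Finset.mem_union, Finset.mem_Ico]
    omega
  have hdisj2 : Disjoint (Finset.Ico (h+1) K) (Finset.Icc K n) := by
    rw [Finset.disjoint_left]
    intro a ha ha'
    simp only [Finset.mem_Icc] at ha'
    simp only [Finset.mem_Ico] at ha
    omega
  have hlower : q^(n-h) * (3/2 : ℝ)^t ≤ ∏ i ∈ Finset.Icc (h+1) n, (i:ℝ) := by
    rw [hsplit2, Finset.prod_union hdisj2]
    have hC : q^(K-(h+1)) ≤ ∏ i ∈ Finset.Ico (h+1) K, (i:ℝ) := by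
      calc q^(K-(h+1)) = ∏ _i ∈ Finset.Ico (h+1) K, q := by
            rw [Finset.prod_const, Nat.card_Ico]
        _ ≤ ∏ i ∈ Finset.Ico (h+1) K, (i:ℝ) := by
            apply Finset.prod_le_prod (fun i _ => hqpos.le)
            intro i hi
            simp only [Finset.mem_Ico] at hi
            exact hq_le i hi.1
    have hD : ((3/2 : ℝ)*q)^t ≤ ∏ i ∈ Finset.Icc K n, (i:ℝ) := by
      calc ((3/2 : ℝ)*q)^t = ∏ _i ∈ Finset.Icc K n, ((3/2 : ℝ)*q) := by
            rw [Finset.prod_const, Nat.card_Icc]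
        _ ≤ ∏ i ∈ Finset.Icc K n, (i:ℝ) := by
            apply Finset.prod_le_prod (fun i _ => by positivity)
            intro i hi
            simp only [Finset.mem_Icc] at hi
            have h5 : 3*(n+1) ≤ 4*i := by omega
            have h6 : 3*((n:ℝ)+1) ≤ 4*(i:ℝ) := by exact_mod_cast h5
            rw [hq]
            linarith
    have heq : q^(n-h) * (3/2 : ℝ)^t = q^(K-(h+1)) * ((3/2 : ℝ)*q)^t := by
      rw [mul_pow]
      have e : q^(n-h) = q^(K-(h+1)) * q^t := by
        rw [← pow_add]
        congr 1
        omega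
      rw [e]
      ring
    rw [heq]
    exact mul_le_mul hC hD (by positivity) (Finset.prod_nonneg (fun i _ => by positivity))
  have hcn_32 : c^n ≤ (3/2 : ℝ)^t := by
    apply le_of_pow_le_pow_left₀ (by norm_num : (4:ℕ) ≠ 0) (by positivity)
    calc (c^n)^4 = c^(4*n) := by rw [← pow_mul]; congr 1; ring
      _ ≤ ((16/15 : ℝ))^(4*n) := pow_le_pow_left₀ hcpos.le hc2 _
      _ ≤ (3/2 : ℝ)^(n-2) := pow_ineq n hn
      _ ≤ (3/2 : ℝ)^(4*t) := pow_le_pow_right₀ (by norm_num) (by omega)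
      _ = ((3/2 : ℝ)^t)^4 := by rw [← pow_mul]; congr 1; ring
  have key : (∏ i ∈ Finset.Icc 1 n, min (i:ℝ) q) * c^n ≤ (n.factorial : ℝ) := by
    calc (∏ i ∈ Finset.Icc 1 n, min (i:ℝ) q) * c^n
        ≤ ((h.factorial : ℝ) * q^(n-h)) * c^n :=
          mul_le_mul_of_nonneg_right hminprod (by positivity)
      _ ≤ ((h.factorial : ℝ) * q^(n-h)) * (3/2 : ℝ)^t :=
          mul_le_mul_of_nonneg_left hcn_32 (by positivity)
      _ = (h.factorial : ℝ) * (q^(n-h) * (3/2 : ℝ)^t) := by ring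
      _ ≤ (h.factorial : ℝ) * ∏ i ∈ Finset.Icc (h+1) n, (i:ℝ) :=
          mul_le_mul_of_nonneg_left hlower (by positivity)
      _ = (n.factorial : ℝ) := hfactsplit.symm
  have hfact0 : (0:ℝ) < (n.factorial : ℝ) := by
    exact_mod_cast n.factorial_pos
  rw [mul_div_assoc']
  rw [div_le_div_iff₀ hfact0 (by positivity)]
  have hfin := mul_le_mul_of_nonneg_left key hn1.le
  calc (∏ i ∈ Finset.Icc 1 n, min (i:ℝ) q) * ((n:ℝ)+1) * c^n
      = ((n:ℝ)+1) * ((∏ i ∈ Finset.Icc 1 n, min (i:ℝ) q) * c^n) := by ring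
    _ ≤ ((n:ℝ)+1) * (n.factorial : ℝ) := hfin


lemma covMin_nonneg (n i : ℕ) (K : Set (EuclideanSpace ℝ (Fin n))) : 0 ≤ covMin n i K :=
  Real.sInf_nonneg (fun x hx => hx.1.le)

lemma covMin_le_i (n i : ℕ) (hi1 : 1 ≤ i) (hin : i ≤ n) :
    covMin n i (Tsimplex n) ≤ (i:ℝ) := by
  have h := covMin_Tsimplex_le n i 1 hi1 hin le_rfl
  simpa using h

lemma covMin_le_half (n i : ℕ) (hi1 : 1 ≤ i) (hin : i ≤ n) :
    covMin n i (Tsimplex n) ≤ ((n:ℝ)+1)/2 := by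
  refine le_of_forall_pos_le_add (fun ε hε => ?_)
  obtain ⟨m, hm⟩ := exists_nat_gt ((i:ℝ)/ε)
  have hi0 : (0:ℝ) < i := by exact_mod_cast hi1
  have hm1 : 1 ≤ m := by
    by_contra h
    push_neg at h
    interval_cases m
    have h3 : (0:ℝ) < (i:ℝ)/ε := by positivity
    norm_num at hm
    linarith
  have hm0 : (0:ℝ) < m := by exact_mod_cast hm1
  have hb := covMin_Tsimplex_le n i m hi1 hin hm1
  have h1 : ((n:ℝ)+1)*((m:ℝ)-1)/(2*m) ≤ ((n:ℝ)+1)/2 := by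
    rw [div_le_div_iff₀ (by positivity) (by norm_num)]
    have hn0 : (0:ℝ) ≤ (n:ℝ)+1 := by positivity
    nlinarith
  have h2 : (i:ℝ)/m ≤ ε := by
    rw [div_le_iff₀ hm0]
    have := (div_lt_iff₀ hε).1 hm
    nlinarith
  linarith

/-- For `n ≥ 6`, the covering product of the simplex `T_n = conv{e_1, …, e_n, -𝟏}` satisfies
`μ_1(T_n)·…·μ_n(T_n)·vol(T_n) ≤ (n+1)/(16/15)^{7n/15}`. -/
theorem covering_product_Tsimplex_le (n : ℕ) (hn : 6 ≤ n) :
    (∏ i ∈ Finset.Icc 1 n, covMin n i (Tsimplex n)) * (volume (Tsimplex n)).toReal ≤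
      ((n : ℝ) + 1) / (16 / 15 : ℝ) ^ (7 * (n : ℝ) / 15) := by
  have hprod : (∏ i ∈ Finset.Icc 1 n, covMin n i (Tsimplex n))
      ≤ ∏ i ∈ Finset.Icc 1 n, min (i:ℝ) (((n:ℝ)+1)/2) := by
    apply Finset.prod_le_prod
    · intro i _; exact covMin_nonneg n i _
    · intro i hi
      simp only [Finset.mem_Icc] at hi
      exact le_min (covMin_le_i n i hi.1 hi.2) (covMin_le_half n i hi.1 hi.2)
  have hminnn : (0:ℝ) ≤ ∏ i ∈ Finset.Icc 1 n, min (i:ℝ) (((n:ℝ)+1)/2) := by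
    apply Finset.prod_nonneg
    intro i hi
    have : (0:ℝ) ≤ i := by positivity
    exact le_min this (by positivity)
  have hvol0 : 0 ≤ (volume (Tsimplex n)).toReal := ENNReal.toReal_nonneg
  calc (∏ i ∈ Finset.Icc 1 n, covMin n i (Tsimplex n)) * (volume (Tsimplex n)).toReal
      ≤ (∏ i ∈ Finset.Icc 1 n, min (i:ℝ) (((n:ℝ)+1)/2)) * (volume (Tsimplex n)).toReal :=
        mul_le_mul_of_nonneg_right hprod hvol0
    _ ≤ (∏ i ∈ Finset.Icc 1 n, min (i:ℝ) (((n:ℝ)+1)/2)) * (((n:ℝ)+1)/(n.factorial : ℝ)) :=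
        mul_le_mul_of_nonneg_left (Tsimplex_volume n) hminnn
    _ ≤ ((n : ℝ) + 1) / (16 / 15 : ℝ) ^ (7 * (n : ℝ) / 15) := arith_key n hn
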